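/- Let G = B wr X with B, X abelian, X torsion-free, H ≤ G of finite index m, f : H → G a simple virtual endomorphism, and A the base group. Set A_0 = A ∩ H and L = f(A_0) ∩ A. If L is trivial, then B^m = 1 (B has exponent dividing m). -/

import Mathlib

def shiftEquiv {B X : Type*} [AddCommGroup B] [AddCommGroup X] (x : X) :
    (X →₀ B) ≃+ (X →₀ B) := Finsupp.domCongr (Equiv.addRight x)

noncomputable def shiftHom (B X : Type*) [AddCommGroup B] [AddCommGroup X] :
    Multiplicative X →* Multiplicative (AddAut (X →₀ B)) :=
  MonoidHom.mk' (fun x => Multiplicative.ofAdd (shiftEquiv x.toAdd)) (by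
    intro a b
    apply Multiplicative.toAdd.injective
    apply AddEquiv.ext
    intro f
    ext y
    simp [shiftEquiv, Finsupp.domCongr, Equiv.Perm.mul_def, sub_eq_add_neg]
    congr 1
    abel)

noncomputable def wreathAct (B X : Type*) [AddCommGroup B] [AddCommGroup X] :
    Multiplicative X →* MulAut (Multiplicative (X →₀ B)) :=
  { toFun := fun x => AddEquiv.toMultiplicative (shiftHom B X x).toAdd
    map_one' := by ext f; simp
    map_mul' := by intro a b; ext f; simp }

def AddMonoid.IsTorsionFree (G : Type*) [AddMonoid G] : Prop :=
  ∀ g : G, g ≠ 0 → ¬IsOfFinAddOrder g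

abbrev Wreath (B X : Type*) [AddCommGroup B] [AddCommGroup X] :=
  SemidirectProduct (Multiplicative (X →₀ B)) (Multiplicative X) (wreathAct B X)

open Subgroup SemidirectProduct Pointwise Multiplicative

theorem relindex_dvd_index_of_normal' {G : Type*} [Group G] (H N : Subgroup G) [hN : N.Normal] :
    H.relIndex N ∣ H.index := by
  have key : H.relIndex N = H.relIndex (N ⊔ H) := by
    rw [Subgroup.relIndex, Subgroup.relIndex, Subgroup.index, Subgroup.index]
    apply Nat.card_congr
    refine Equiv.ofBijective (fun q => Quotient.liftOn' q
      (fun n => (QuotientGroup.mk (Subgroup.inclusion (le_sup_left : N ≤ N ⊔ H) n) :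
        _ ⧸ H.subgroupOf (N ⊔ H))) ?_) ⟨?_, ?_⟩
    · intro a b hab
      have h1 : a⁻¹ * b ∈ H.subgroupOf N := QuotientGroup.leftRel_apply.mp hab
      apply Quotient.sound'
      apply QuotientGroup.leftRel_apply.mpr
      simpa [Subgroup.mem_subgroupOf] using h1
    · intro q1 q2
      induction q1 using Quotient.inductionOn'
      induction q2 using Quotient.inductionOn'
      intro h
      apply Quotient.sound'
      apply QuotientGroup.leftRel_apply.mpr
      have := QuotientGroup.leftRel_apply.mp (Quotient.exact' h)
      simpa [Subgroup.mem_subgroupOf] using this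
    · intro q
      induction q using Quotient.inductionOn' with
      | h g =>
        obtain ⟨g, hg⟩ := g
        have hg2 : g ∈ ((N : Set G) * (H : Set G)) := by rw [← Subgroup.normal_mul]; exact hg
        obtain ⟨x, hx, y, hy, rfl⟩ := hg2
        refine ⟨Quotient.mk'' ⟨x, hx⟩, ?_⟩
        apply Quotient.sound'
        apply QuotientGroup.leftRel_apply.mpr
        simpa [Subgroup.mem_subgroupOf] using hy
  rw [key]
  exact Subgroup.relIndex_dvd_index_of_le le_sup_right

section WreathLemmas

variable {B X : Type*} [AddCommGroup B] [AddCommGroup X]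

theorem wreathAct_apply (t : Multiplicative X) (v : X →₀ B) :
    (wreathAct B X t) (Multiplicative.ofAdd v)
      = Multiplicative.ofAdd (Finsupp.equivMapDomain (Equiv.addRight t.toAdd) v) := rfl

theorem conj_inl' (g : Wreath B X) (n : Multiplicative (X →₀ B)) :
    g * inl n * g⁻¹ = inl ((wreathAct B X) g.right n) := by
  ext
  · simp [mul_assoc]
  · simp

theorem comm_inl (h : Wreath B X) (c : Multiplicative (X →₀ B)) :
    inl c * h * (inl c)⁻¹ * h⁻¹ = inl (c * ((wreathAct B X) h.right c)⁻¹) := by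
  have h1 : h * (inl c)⁻¹ * h⁻¹ = inl ((wreathAct B X) h.right c⁻¹) := by
    rw [← map_inv inl c, conj_inl']
  rw [mul_assoc, mul_assoc, ← mul_assoc h, h1, ← map_mul, map_inv]

theorem wreathAct_comm (s t : Multiplicative X) (c : Multiplicative (X →₀ B)) :
    (wreathAct B X s) ((wreathAct B X t) c) = (wreathAct B X t) ((wreathAct B X s) c) := by
  rw [← MulAut.mul_apply, ← map_mul, mul_comm s t, map_mul, MulAut.mul_apply]

end WreathLemmas

/-- `G = B wr X`, `X` torsion-free, `H ≤ G` of finite index `m`, `f` a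
simple virtual endomorphism; `A` the base group, `A₀ = A ∩ H`, `L = f(A₀) ∩ A`.
If `L` is trivial then `B^m = 1` (B has exponent dividing m). -/
theorem stmt12 {B X : Type*} [AddCommGroup B] [AddCommGroup X]
    (hX : AddMonoid.IsTorsionFree X)
    (H : Subgroup (Wreath B X)) [H.FiniteIndex] (f : H →* Wreath B X)
    (hsimple : ∀ K : Subgroup (Wreath B X), K.Normal → ∀ hK : K ≤ H,
      (∀ k (hk : k ∈ K), f ⟨k, hK hk⟩ ∈ K) → K = ⊥)
    (hL : Subgroup.map f
        (((SemidirectProduct.inl : Multiplicative (X →₀ B) →* Wreath B X).range).comap H.subtype)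
        ⊓ (SemidirectProduct.inl : Multiplicative (X →₀ B) →* Wreath B X).range = ⊥) :
    ∀ b : B, H.index • b = 0 := by
  classical
  intro b
  have hm0 : H.index ≠ 0 := Subgroup.FiniteIndex.index_ne_zero
  set m := H.index with hmdef
  by_cases hXtriv : ∀ x : X, x = (0 : X)
  · -- X is trivial
    haveI : Subsingleton X := ⟨fun a c => by rw [hXtriv a, hXtriv c]⟩
    have hright : ∀ g : Wreath B X, g.right = 1 := fun g => Subsingleton.elim _ _
    have hginl : ∀ g : Wreath B X, g = inl g.left := by
      intro g
      conv_lhs => rw [← inl_left_mul_inr_right g]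
      rw [hright, map_one, mul_one]
    have hHnormal : H.Normal := by
      constructor
      intro n hn g
      rw [hginl n, conj_inl', hright, map_one, MulAut.one_apply, ← hginl n]
      exact hn
    have hfneq : ∀ h : H, f h = 1 := by
      intro h
      have h1 : f h ∈ Subgroup.map f
          (((SemidirectProduct.inl : Multiplicative (X →₀ B) →* Wreath B X).range).comap
            H.subtype)
          ⊓ (SemidirectProduct.inl : Multiplicative (X →₀ B) →* Wreath B X).range := by
        constructor
        · exact Subgroup.mem_map.mpr ⟨h,
            Subgroup.mem_comap.mpr ⟨(h : Wreath B X).left, (hginl _).symm⟩, rfl⟩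
        · exact ⟨(f h).left, (hginl _).symm⟩
      rw [hL] at h1
      exact Subgroup.mem_bot.mp h1
    have hHbot : H = ⊥ :=
      hsimple H hHnormal le_rfl (fun k hk => by rw [hfneq]; exact one_mem H)
    have hcard : Nat.card (Wreath B X) = m := by rw [hmdef, hHbot, Subgroup.index_bot]
    have h1 : (inl (Multiplicative.ofAdd (Finsupp.single (0 : X) b)) : Wreath B X) ^ m = 1 := by
      rw [← hcard]; exact pow_card_eq_one'
    rw [← map_pow] at h1
    have h2 : (Multiplicative.ofAdd (Finsupp.single (0 : X) b)) ^ m = 1 :=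
      inl_injective (by rw [h1, map_one])
    rw [← ofAdd_nsmul, Finsupp.smul_single] at h2
    have h3 : Finsupp.single (0 : X) (m • b) = 0 := by
      have := congrArg Multiplicative.toAdd h2
      simpa using this
    exact (Finsupp.single_eq_zero).mp h3
  · -- X is nontrivial
    push_neg at hXtriv
    obtain ⟨x, hx⟩ := hXtriv
    -- Step A : m-th powers of base elements lie in H
    haveI hAnormal : ((inl : Multiplicative (X →₀ B) →* Wreath B X).range).Normal := by
      rw [range_inl_eq_ker_rightHom]; infer_instance
    have hA : ∀ c : Multiplicative (X →₀ B), (inl (c ^ m) : Wreath B X) ∈ H := by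
      have hdvd : (H.comap (inl : Multiplicative (X →₀ B) →* Wreath B X)).index ∣ m := by
        rw [Subgroup.index_comap]
        exact relindex_dvd_index_of_normal' H _
      obtain ⟨k, hk⟩ := hdvd
      intro c
      haveI : (H.comap (inl : Multiplicative (X →₀ B) →* Wreath B X)).FiniteIndex :=
        ⟨fun h => hm0 (by rw [hk, h, zero_mul])⟩
      have h1 : c ^ (H.comap (inl : Multiplicative (X →₀ B) →* Wreath B X)).index
          ∈ H.comap (inl : Multiplicative (X →₀ B) →* Wreath B X) :=
        Subgroup.pow_index_mem _ c
      have h2 := pow_mem h1 k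
      rw [← pow_mul, ← hk] at h2
      exact h2
    -- Step B : m-th powers in X are in the image of H
    have hT : ∀ t : Multiplicative X, t ^ m ∈ H.map (rightHom : Wreath B X →* Multiplicative X) := by
      have hdvd : (H.map (rightHom : Wreath B X →* Multiplicative X)).index ∣ m :=
        H.index_map_dvd rightHom_surjective
      obtain ⟨k, hk⟩ := hdvd
      intro t
      haveI : (H.map (rightHom : Wreath B X →* Multiplicative X)).FiniteIndex :=
        ⟨fun h => hm0 (by rw [hk, h, zero_mul])⟩
      have h1 := Subgroup.pow_index_mem (H.map (rightHom : Wreath B X →* Multiplicative X)) t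
      have h2 := pow_mem h1 k
      rwa [← pow_mul, ← hk] at h2
    -- the generating set of K
    set gset : Set (Wreath B X) :=
      {w | ∃ (c : Multiplicative (X →₀ B)) (t : Multiplicative X),
        t ∈ H.map (rightHom : Wreath B X →* Multiplicative X) ∧
        w = inl (c ^ m * ((wreathAct B X t) (c ^ m))⁻¹)} with hgsetdef
    have hgsetH : gset ⊆ (H : Set (Wreath B X)) := by
      rintro w ⟨c, t, ht, rfl⟩
      obtain ⟨h, hh, rfl⟩ := ht
      rw [rightHom_eq_right, ← comm_inl]
      exact mul_mem (mul_mem (mul_mem (hA c) hh) (inv_mem (hA c))) (inv_mem hh)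
    have hKH : Subgroup.closure gset ≤ H := (Subgroup.closure_le H).mpr hgsetH
    -- K is normal
    have hconj : ∀ g : Wreath B X, ∀ w ∈ gset, g * w * g⁻¹ ∈ gset := by
      rintro g w ⟨c, t, ht, rfl⟩
      refine ⟨(wreathAct B X g.right) c, t, ht, ?_⟩
      rw [conj_inl']
      congr 1
      simp only [map_mul, map_inv, map_pow]
      rw [wreathAct_comm]
    have hKnormal : (Subgroup.closure gset).Normal := by
      constructor
      intro n hn g
      have hmap : (Subgroup.closure gset).map (MulAut.conj g).toMonoidHom ≤
          Subgroup.closure gset := by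
        rw [MonoidHom.map_closure]
        apply (Subgroup.closure_le _).mpr
        rintro w ⟨u, hu, rfl⟩
        apply Subgroup.subset_closure
        simpa [MulAut.conj_apply] using hconj g u hu
      exact hmap ⟨n, hn, rfl⟩
    -- f kills K
    have hkey : ∀ w (hw : w ∈ Subgroup.closure gset), f ⟨w, hKH hw⟩ = 1 := by
      intro w hw
      induction hw using Subgroup.closure_induction with
      | mem w hwg =>
        obtain ⟨c, t, ht, rfl⟩ := hwg
        obtain ⟨h, hh, rfl⟩ := ht
        have hu : (inl (c ^ m) : Wreath B X) ∈ H := hA c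
        have hwH : (inl (c ^ m * ((wreathAct B X (rightHom h)) (c ^ m))⁻¹) : Wreath B X) ∈ H :=
          hgsetH ⟨c, rightHom h, ⟨h, hh, rfl⟩, rfl⟩
        have heq : (⟨inl (c ^ m * ((wreathAct B X (rightHom h)) (c ^ m))⁻¹), hwH⟩ : H)
            = ⟨inl (c ^ m), hu⟩ * ⟨h, hh⟩ * (⟨inl (c ^ m), hu⟩)⁻¹ * (⟨h, hh⟩)⁻¹ := by
          apply Subtype.ext
          simp only [Subgroup.coe_mul, InvMemClass.coe_inv]
          rw [comm_inl, rightHom_eq_right]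
        have hmem : f ⟨inl (c ^ m * ((wreathAct B X (rightHom h)) (c ^ m))⁻¹), hwH⟩ ∈
            Subgroup.map f
              (((SemidirectProduct.inl : Multiplicative (X →₀ B) →* Wreath B X).range).comap
                H.subtype)
            ⊓ (SemidirectProduct.inl : Multiplicative (X →₀ B) →* Wreath B X).range := by
          constructor
          · exact Subgroup.mem_map.mpr ⟨_,
              Subgroup.mem_comap.mpr ⟨c ^ m * ((wreathAct B X (rightHom h)) (c ^ m))⁻¹, rfl⟩, rfl⟩
          · rw [range_inl_eq_ker_rightHom]
            refine MonoidHom.mem_ker.mpr ?_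
            rw [heq]
            simp only [map_mul, map_inv]
            rw [mul_comm ((rightHom : Wreath B X →* Multiplicative X) (f ⟨inl (c ^ m), hu⟩))]
            group
        rw [hL] at hmem
        exact Subgroup.mem_bot.mp hmem
      | one =>
        have : (⟨(1 : Wreath B X), hKH (one_mem _)⟩ : H) = 1 := rfl
        rw [this, map_one]
      | mul a c ha hc pa pc =>
        have : (⟨a * c, hKH (mul_mem ha hc)⟩ : H) = ⟨a, hKH ha⟩ * ⟨c, hKH hc⟩ := rfl
        rw [this, map_mul, pa, pc, mul_one]
      | inv a ha pa =>
        have : (⟨a⁻¹, hKH (inv_mem ha)⟩ : H) = (⟨a, hKH ha⟩)⁻¹ := rfl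
        rw [this, map_inv, pa, inv_one]
    have hbot : Subgroup.closure gset = ⊥ :=
      hsimple _ hKnormal hKH (fun k hk => by rw [hkey k hk]; exact one_mem _)
    -- extract the conclusion
    have hxT : (Multiplicative.ofAdd x) ^ m ∈
        H.map (rightHom : Wreath B X →* Multiplicative X) := hT _
    have hgenmem : (inl ((Multiplicative.ofAdd (Finsupp.single (0 : X) b)) ^ m *
        ((wreathAct B X ((Multiplicative.ofAdd x) ^ m))
          ((Multiplicative.ofAdd (Finsupp.single (0 : X) b)) ^ m))⁻¹) : Wreath B X)
        ∈ Subgroup.closure gset :=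
      Subgroup.subset_closure ⟨_, _, hxT, rfl⟩
    rw [hbot, Subgroup.mem_bot] at hgenmem
    have h4 : (Multiplicative.ofAdd (Finsupp.single (0 : X) b)) ^ m *
        ((wreathAct B X ((Multiplicative.ofAdd x) ^ m))
          ((Multiplicative.ofAdd (Finsupp.single (0 : X) b)) ^ m))⁻¹ = 1 :=
      inl_injective (by rw [hgenmem, map_one])
    rw [mul_inv_eq_one] at h4
    rw [← ofAdd_nsmul, Finsupp.smul_single] at h4
    rw [wreathAct_apply, Finsupp.equivMapDomain_single] at h4
    have h5 := congrArg Multiplicative.toAdd h4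
    simp only [toAdd_ofAdd] at h5
    rcases (Finsupp.single_eq_single_iff _ _ _ _).mp h5 with ⟨h6, _⟩ | ⟨h6, _⟩
    · exfalso
      have hmx : m • x = 0 := by
        have : ((Equiv.addRight (((Multiplicative.ofAdd x) ^ m).toAdd)) (0 : X)) = 0 + m • x := by
          simp [toAdd_pow]
        rw [this] at h6
        rw [zero_add] at h6
        exact h6.symm
      exact hX x hx (isOfFinAddOrder_iff_nsmul_eq_zero.mpr
        ⟨m, Nat.pos_of_ne_zero hm0, hmx⟩)
    · exact h6
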